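/- Let ψ : (0,1) → (0,∞) be differentiable with nonincreasing derivative ψ' (i.e., ψ is concave), and let g : (0,∞) → [0,∞] be measurable. Then ∫₀¹ g(ψ(x)) |ψ'(x)| dx ≤ 2 ∫₀^∞ g(y) dy. -/

import Mathlib

open MeasureTheory

/-- 1D lintegral change of variables. -/
lemma lintegral_image_eq_lintegral_abs_deriv_mul' {s : Set ℝ} {f f' : ℝ → ℝ}
    (hs : MeasurableSet s) (hf' : ∀ x ∈ s, HasDerivWithinAt f (f' x) s x)
    (hf : Set.InjOn f s) (g : ℝ → ENNReal) :
    ∫⁻ x in f '' s, g x = ∫⁻ x in s, ENNReal.ofReal |f' x| * g (f x) := by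
  simpa only [ContinuousLinearMap.det_toSpanSingleton] using
    lintegral_image_eq_lintegral_abs_det_fderiv_mul volume hs
      (fun x hx => (hf' x hx).hasFDerivWithinAt) hf g

/-- Injectivity from nonvanishing derivative on an ord-connected set. -/
lemma injOn_of_deriv_ne_zero {s : Set ℝ} {f f' : ℝ → ℝ}
    (hs : s.OrdConnected)
    (hd : ∀ x ∈ s, HasDerivAt f (f' x) x)
    (hne : ∀ x ∈ s, f' x ≠ 0) : Set.InjOn f s := by
  have key : ∀ x ∈ s, ∀ y ∈ s, x < y → f x ≠ f y := by
    intro x hx y hy hxy hfeq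
    have hsub : Set.Icc x y ⊆ s := hs.out hx hy
    obtain ⟨c, hc, hc'⟩ := exists_hasDerivAt_eq_slope f f' hxy
      (fun z hz => (hd z (hsub hz)).continuousAt.continuousWithinAt)
      (fun z hz => hd z (hsub (Set.Ioo_subset_Icc_self hz)))
    have hcs : c ∈ s := hsub (Set.Ioo_subset_Icc_self hc)
    apply hne c hcs
    rw [hc', hfeq, sub_self, zero_div]
  intro x hx y hy hfeq
  rcases lt_trichotomy x y with h | h | h
  · exact absurd hfeq (key x hx y hy h)
  · exact h
  · exact absurd hfeq.symm (key y hy x hx h)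

/-- Change-of-variables estimate from the proof of Lemma 5.3: if `ψ` is positive and
concave (derivative `ψ'` nonincreasing) on `(0,1)` and `g : (0,∞) → [0,∞]` is measurable,
then `∫₀¹ g(ψ(x)) |ψ'(x)| dx ≤ 2 ∫₀^∞ g(y) dy`. -/
theorem stmt_19 (ψ ψ' : ℝ → ℝ)
    (hψpos : ∀ x ∈ Set.Ioo (0:ℝ) 1, 0 < ψ x)
    (hderiv : ∀ x ∈ Set.Ioo (0:ℝ) 1, HasDerivAt ψ (ψ' x) x)
    (hmono : ∀ x ∈ Set.Ioo (0:ℝ) 1, ∀ y ∈ Set.Ioo (0:ℝ) 1, x ≤ y → ψ' y ≤ ψ' x)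
    (g : ℝ → ENNReal) (hg : Measurable g) :
    (∫⁻ x in Set.Ioo (0:ℝ) 1, g (ψ x) * ENNReal.ofReal |ψ' x|)
      ≤ 2 * ∫⁻ y in Set.Ioi (0:ℝ), g y := by
  set A : Set ℝ := {x | x ∈ Set.Ioo (0:ℝ) 1 ∧ 0 < ψ' x} with hA
  set B : Set ℝ := {x | x ∈ Set.Ioo (0:ℝ) 1 ∧ ψ' x < 0} with hB
  have hAsub : A ⊆ Set.Ioo (0:ℝ) 1 := fun x hx => hx.1
  have hBsub : B ⊆ Set.Ioo (0:ℝ) 1 := fun x hx => hx.1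
  have hAord : A.OrdConnected := by
    constructor
    intro x hx y hy z hz
    have hzI : z ∈ Set.Ioo (0:ℝ) 1 :=
      ⟨lt_of_lt_of_le hx.1.1 hz.1, lt_of_le_of_lt hz.2 hy.1.2⟩
    exact ⟨hzI, lt_of_lt_of_le hy.2 (hmono z hzI y hy.1 hz.2)⟩
  have hBord : B.OrdConnected := by
    constructor
    intro x hx y hy z hz
    have hzI : z ∈ Set.Ioo (0:ℝ) 1 :=
      ⟨lt_of_lt_of_le hx.1.1 hz.1, lt_of_le_of_lt hz.2 hy.1.2⟩
    exact ⟨hzI, lt_of_le_of_lt (hmono x hx.1 z hzI hz.1) hx.2⟩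
  have hAmeas : MeasurableSet A := hAord.measurableSet
  have hBmeas : MeasurableSet B := hBord.measurableSet
  have hAinj : Set.InjOn ψ A :=
    injOn_of_deriv_ne_zero hAord (fun x hx => hderiv x (hAsub hx))
      (fun x hx => ne_of_gt hx.2)
  have hBinj : Set.InjOn ψ B :=
    injOn_of_deriv_ne_zero hBord (fun x hx => hderiv x (hBsub hx))
      (fun x hx => ne_of_lt hx.2)
  have hcofA : ∫⁻ x in ψ '' A, g x = ∫⁻ x in A, ENNReal.ofReal |ψ' x| * g (ψ x) :=
    lintegral_image_eq_lintegral_abs_deriv_mul' hAmeas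
      (fun x hx => (hderiv x (hAsub hx)).hasDerivWithinAt) hAinj g
  have hcofB : ∫⁻ x in ψ '' B, g x = ∫⁻ x in B, ENNReal.ofReal |ψ' x| * g (ψ x) :=
    lintegral_image_eq_lintegral_abs_deriv_mul' hBmeas
      (fun x hx => (hderiv x (hBsub hx)).hasDerivWithinAt) hBinj g
  have himA : ψ '' A ⊆ Set.Ioi (0:ℝ) := by
    rintro _ ⟨x, hx, rfl⟩; exact hψpos x (hAsub hx)
  have himB : ψ '' B ⊆ Set.Ioi (0:ℝ) := by
    rintro _ ⟨x, hx, rfl⟩; exact hψpos x (hBsub hx)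
  have hboundA : ∫⁻ x in A, g (ψ x) * ENNReal.ofReal |ψ' x| ≤ ∫⁻ y in Set.Ioi (0:ℝ), g y := by
    calc ∫⁻ x in A, g (ψ x) * ENNReal.ofReal |ψ' x|
        = ∫⁻ x in A, ENNReal.ofReal |ψ' x| * g (ψ x) := by
          simp_rw [mul_comm]
      _ = ∫⁻ x in ψ '' A, g x := hcofA.symm
      _ ≤ ∫⁻ y in Set.Ioi (0:ℝ), g y := lintegral_mono_set himA
  have hboundB : ∫⁻ x in B, g (ψ x) * ENNReal.ofReal |ψ' x| ≤ ∫⁻ y in Set.Ioi (0:ℝ), g y := by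
    calc ∫⁻ x in B, g (ψ x) * ENNReal.ofReal |ψ' x|
        = ∫⁻ x in B, ENNReal.ofReal |ψ' x| * g (ψ x) := by
          simp_rw [mul_comm]
      _ = ∫⁻ x in ψ '' B, g x := hcofB.symm
      _ ≤ ∫⁻ y in Set.Ioi (0:ℝ), g y := lintegral_mono_set himB
  set Z : Set ℝ := Set.Ioo (0:ℝ) 1 \ (A ∪ B) with hZ
  have hZmeas : MeasurableSet Z := measurableSet_Ioo.diff (hAmeas.union hBmeas)
  have hZzero : ∫⁻ x in Z, g (ψ x) * ENNReal.ofReal |ψ' x| = 0 := by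
    have hfun : ∀ x ∈ Z, g (ψ x) * ENNReal.ofReal |ψ' x| = (fun _ => (0:ENNReal)) x := by
      intro x hx
      have hx1 : x ∈ Set.Ioo (0:ℝ) 1 := hx.1
      have h0 : ψ' x = 0 := by
        by_contra h0
        rcases lt_or_gt_of_ne h0 with h | h
        · exact hx.2 (Or.inr ⟨hx1, h⟩)
        · exact hx.2 (Or.inl ⟨hx1, h⟩)
      simp [h0]
    rw [setLIntegral_congr_fun hZmeas hfun, lintegral_zero]
  have hsubset : Set.Ioo (0:ℝ) 1 ⊆ (A ∪ B) ∪ Z := by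
    intro x hx
    by_cases h : x ∈ A ∪ B
    · exact Or.inl h
    · exact Or.inr ⟨hx, h⟩
  calc (∫⁻ x in Set.Ioo (0:ℝ) 1, g (ψ x) * ENNReal.ofReal |ψ' x|)
      ≤ ∫⁻ x in (A ∪ B) ∪ Z, g (ψ x) * ENNReal.ofReal |ψ' x| := lintegral_mono_set hsubset
    _ ≤ (∫⁻ x in A ∪ B, g (ψ x) * ENNReal.ofReal |ψ' x|)
        + ∫⁻ x in Z, g (ψ x) * ENNReal.ofReal |ψ' x| := lintegral_union_le _ _ _
    _ ≤ ((∫⁻ x in A, g (ψ x) * ENNReal.ofReal |ψ' x|)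
        + ∫⁻ x in B, g (ψ x) * ENNReal.ofReal |ψ' x|) + 0 := by
          gcongr
      
          · exact lintegral_union_le _ _ _
          · exact le_of_eq hZzero
    _ ≤ ((∫⁻ y in Set.Ioi (0:ℝ), g y) + ∫⁻ y in Set.Ioi (0:ℝ), g y) + 0 := by
          gcongr
    _ = 2 * ∫⁻ y in Set.Ioi (0:ℝ), g y := by rw [add_zero, two_mul]
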